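/- arXiv:0904.0768 — 3 statements merged into one kernel-verified Lean document; each statement's English description precedes it below -/
import Mathlib

section
/- Let G be a Tanner graph (bipartite graph with bit nodes V^b and check nodes V^c) defining a binary linear code of minimum distance d. If a subset S of check nodes satisfies |I(S)| > |S|, where I(S) is the set of bit nodes all of whose neighbors lie in S, then d ≤ |S| + 1. -/
open Finset

/-- Hamming weight of a binary vector. -/
def wt {n : ℕ} (x : Fin n → ZMod 2) : ℕ := (univ.filter (fun i => x i ≠ 0)).card

/-- The neighborhood of bit node `b` in the Tanner graph of `H`: the set of check
nodes adjacent to `b` (support of the `b`-th column). -/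
def colSupp {m n : ℕ} (H : Matrix (Fin m) (Fin n) (ZMod 2)) (b : Fin n) : Finset (Fin m) :=
  univ.filter (fun c => H c b ≠ 0)

/-- `d` is the minimum distance of the binary linear code with parity-check matrix `H`. -/
def IsMinDist {m n : ℕ} (H : Matrix (Fin m) (Fin n) (ZMod 2)) (d : ℕ) : Prop :=
  (∃ x : Fin n → ZMod 2, x ≠ 0 ∧ H.mulVec x = 0 ∧ wt x = d) ∧
  ∀ x : Fin n → ZMod 2, x ≠ 0 → H.mulVec x = 0 → d ≤ wt x

/-- If a subset `S` of check nodes induces more than `|S|` bit nodes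
(bit nodes all of whose neighbors lie in `S`), then `d ≤ |S| + 1`. -/
theorem stmt_0 {m n : ℕ} (H : Matrix (Fin m) (Fin n) (ZMod 2)) (d : ℕ)
    (hd : IsMinDist H d) (S : Finset (Fin m))
    (hS : S.card < (univ.filter (fun b => colSupp H b ⊆ S)).card) :
    d ≤ S.card + 1 := by
  -- choose T ⊆ I(S) with |T| = |S| + 1
  obtain ⟨T, hTsub, hTcard⟩ :=
    Finset.exists_subset_card_eq (s := univ.filter (fun b => colSupp H b ⊆ S))
      (n := S.card + 1) hS
  -- the columns of H indexed by T, restricted to rows in S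
  set v : T → (S → ZMod 2) := fun b c => H c.1 b.1 with hv
  have hnotli : ¬ LinearIndependent (ZMod 2) v := by
    intro hli
    have hle := hli.fintype_card_le_finrank
    have h1 : Fintype.card T = S.card + 1 := by
      simp [Fintype.card_coe, hTcard]
    have h2 : Module.finrank (ZMod 2) (↥S → ZMod 2) = S.card := by
      simp [Module.finrank_pi, Fintype.card_coe]
    rw [h1, h2] at hle
    omega
  obtain ⟨g, hgsum, i, hgi⟩ := Fintype.not_linearIndependent_iff.mp hnotli
  -- build the codeword x
  set x : Fin n → ZMod 2 := fun j => if h : j ∈ T then g ⟨j, h⟩ else 0 with hx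
  have hxi : x i.1 = g i := by simp [hx, i.2]
  have hxne : x ≠ 0 := by
    intro h0
    apply hgi
    rw [← hxi, h0]; rfl
  have hsum : ∀ c : Fin m, H.mulVec x c = ∑ b : T, H c b.1 * g b := by
    intro c
    rw [Matrix.mulVec, dotProduct]
    have h1 : ∑ j : Fin n, H c j * x j = ∑ j ∈ T, H c j * x j := by
      rw [← Finset.sum_subset (Finset.subset_univ T)]
      intro j _ hj
      simp [hx, hj]
    rw [h1, ← Finset.sum_attach T (fun j => H c j * x j)]
    apply Finset.sum_congr rfl
    intro b _
    simp [hx, b.2]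
  have hmul : H.mulVec x = 0 := by
    funext c
    rw [hsum c]
    by_cases hc : c ∈ S
    · have := congrFun hgsum ⟨c, hc⟩
      simpa [v, smul_eq_mul, mul_comm] using this
    · apply Finset.sum_eq_zero
      intro b _
      have hb := hTsub b.2
      simp only [Finset.mem_filter] at hb
      have : c ∉ colSupp H b.1 := fun h => hc (hb.2 h)
      simp only [colSupp, Finset.mem_filter, Finset.mem_univ, true_and, not_not] at this
      simp [this]
  have hwt : wt x ≤ S.card + 1 := by
    rw [← hTcard]
    apply Finset.card_le_card
    intro j hj
    simp only [wt, Finset.mem_filter] at hj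
    by_contra hjT
    exact hj.2 (by simp [hx, hjT])
  exact le_trans (hd.2 x hxne hmul) hwt
end

section
/- Let D be a connected graph in which every vertex has degree at most 3, and let U be a proper subset of vertices of D inducing a connected subgraph D_U. Then there exists an ordering u_1, …, u_k of U such that for each i, the subgraph induced by {u_1, …, u_i} is connected and the degree of u_i within it is at most 2, provided D has no cut edges. -/
set_option linter.unusedSectionVars false
set_option linter.unusedVariables false

open Finset

variable {V : Type} [Fintype V] [DecidableEq V]

/-- Auxiliary: one step of adjacency inside a finset `W`. -/
def sRel (D : SimpleGraph V) (W : Finset V) (a b : V) : Prop :=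
  a ∈ W ∧ b ∈ W ∧ D.Adj a b

/-- Reachability inside `W`. -/
def sReach (D : SimpleGraph V) (W : Finset V) (x y : V) : Prop :=
  Relation.ReflTransGen (sRel D W) x y

/-- Connectivity of the induced subgraph on a finset, phrased elementarily. -/
def fconn (D : SimpleGraph V) (W : Finset V) : Prop :=
  W.Nonempty ∧ ∀ x ∈ W, ∀ y ∈ W, sReach D W x y

lemma sReach.symm {D : SimpleGraph V} {W : Finset V} {x y : V}
    (h : sReach D W x y) : sReach D W y x :=
  by
    haveI : Std.Symm (sRel D W) := ⟨fun a b hab => ⟨hab.2.1, hab.1, hab.2.2.symm⟩⟩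
    exact (Relation.ReflTransGen.symmetric).symm _ _ h

lemma sReach.mono {D : SimpleGraph V} {W W' : Finset V} (hWW : W ⊆ W') {x y : V}
    (h : sReach D W x y) : sReach D W' x y :=
  Relation.ReflTransGen.mono (fun a b hab => ⟨hWW hab.1, hWW hab.2.1, hab.2.2⟩) _ _ h

lemma fconn_iff {D : SimpleGraph V} {W : Finset V} :
    (D.induce (W : Set V)).Connected ↔ fconn D W := by
  constructor
  · intro h
    have hne : W.Nonempty := by
      obtain ⟨⟨v, hv⟩⟩ := h.nonempty
      exact ⟨v, hv⟩
    refine ⟨hne, fun x hx y hy => ?_⟩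
    obtain ⟨p⟩ := h.preconnected ⟨x, hx⟩ ⟨y, hy⟩
    clear h
    generalize hA : (⟨x, hx⟩ : (W : Set V)) = A at p
    generalize hB : (⟨y, hy⟩ : (W : Set V)) = B at p
    have : ∀ (a b : (W : Set V)) (_ : (D.induce (W : Set V)).Walk a b),
        sReach D W a.1 b.1 := by
      intro a b q
      induction q with
      | nil => exact Relation.ReflTransGen.refl
      | @cons u v w h q ih =>
          exact Relation.ReflTransGen.head ⟨u.2, v.2, h⟩ ih
    have := this A B p
    rw [← hA, ← hB] at this
    exact this
  · rintro ⟨hne, hr⟩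
    have key : ∀ {x y : V} (_ : sReach D W x y) (hx : x ∈ W) (hy : y ∈ W),
        (D.induce (W : Set V)).Reachable ⟨x, hx⟩ ⟨y, hy⟩ := by
      intro x y h
      induction h with
      | refl => intro hx hy; rfl
      | @tail b c hab hbc ih =>
          intro hx hy
          exact (ih hx hbc.1).trans (SimpleGraph.Adj.reachable (by exact hbc.2.2))
    haveI : Nonempty (W : Set V) := ⟨⟨hne.choose, hne.choose_spec⟩⟩
    exact ⟨fun a b => by
      obtain ⟨x, hx⟩ := a; obtain ⟨y, hy⟩ := b
      exact key (hr x hx y hy) hx hy⟩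

lemma sReach.restrict {D : SimpleGraph V} {W T : Finset V}
    (closed : ∀ p q, p ∈ T → q ∈ W → D.Adj p q → q ∈ T)
    {x y : V} (hx : x ∈ T) (h : sReach D W x y) : sReach D T x y ∧ y ∈ T := by
  induction h with
  | refl => exact ⟨Relation.ReflTransGen.refl, hx⟩
  | tail hxb hbc ih =>
      obtain ⟨hc1, hc2⟩ := ih
      have hcT := closed _ _ hc2 hbc.2.1 hbc.2.2
      exact ⟨hc1.tail ⟨hc2, hcT, hbc.2.2⟩, hcT⟩

lemma exit_lemma {D : SimpleGraph V} {W S : Finset V} {w0 : V}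
    (closed : ∀ p q, p ∈ S → q ∈ W → q ≠ w0 → D.Adj p q → q ∈ S)
    (hw0 : w0 ∉ S) {a : V} (hchain : sReach D W a w0) (haS : a ∈ S) :
    ∃ z ∈ S, D.Adj z w0 := by
  have h := hchain.symm
  clear hchain
  induction h with
  | refl => exact absurd haS hw0
  | tail hwb hbc ih =>
      rename_i b c
      by_cases hb : b = w0
      · subst hb
        exact ⟨c, haS, hbc.2.2.symm⟩
      · exact ih (closed _ _ haS hbc.1 hb hbc.2.2.symm)

lemma walk_cross {G : SimpleGraph V} {W : Finset V} :
    ∀ {x y : V}, G.Walk x y → x ∈ W → y ∉ W → ∃ a ∈ W, ∃ b, b ∉ W ∧ G.Adj a b := by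
  intro x y p
  induction p with
  | nil => exact fun hx hy => absurd hx hy
  | cons h p ih =>
      rename_i a c d
      intro hx hy
      by_cases hc : c ∈ W
      · exact ih hc hy
      · exact ⟨a, hx, c, hc, h⟩

lemma ndeg_le_degree (D : SimpleGraph V) [DecidableRel D.Adj] (W : Finset V) (v : V) :
    (W.filter (D.Adj v)).card ≤ D.degree v := by
  rw [← SimpleGraph.card_neighborFinset_eq_degree]
  apply Finset.card_le_card
  intro z hz
  rw [SimpleGraph.mem_neighborFinset]
  exact (Finset.mem_filter.mp hz).2

lemma all_nbrs_in (D : SimpleGraph V) [DecidableRel D.Adj] (hdeg : ∀ v, D.degree v ≤ 3)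
    {W : Finset V} {w : V} (h3 : 3 ≤ (W.filter (D.Adj w)).card)
    {z : V} (hz : D.Adj w z) : z ∈ W := by
  have hsub : W.filter (D.Adj w) ⊆ D.neighborFinset w := by
    intro q hq
    rw [SimpleGraph.mem_neighborFinset]
    exact (Finset.mem_filter.mp hq).2
  have hcard : (D.neighborFinset w).card ≤ (W.filter (D.Adj w)).card := by
    have := hdeg w
    rw [← SimpleGraph.card_neighborFinset_eq_degree] at this
    omega
  have heq := Finset.eq_of_subset_of_card_le hsub hcard
  have : z ∈ D.neighborFinset w := (SimpleGraph.mem_neighborFinset _ _ _).mpr hz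
  rw [← heq] at this
  exact (Finset.mem_filter.mp this).1

lemma leaf_of_boundary (D : SimpleGraph V) [DecidableRel D.Adj]
    (hdeg : ∀ v, D.degree v ≤ 3) (hbridge : ∀ e ∈ D.edgeSet, ¬ D.IsBridge e)
    {W : Finset V} {u b : V} (hu : u ∈ W) (hb : b ∉ W) (hadj : D.Adj u b)
    (honly : ∀ a ∈ W, a ≠ u → ∀ c, D.Adj a c → c ∈ W) :
    (W.filter (D.Adj u)).card ≤ 1 := by
  by_contra hcon
  push_neg at hcon
  -- u has exactly one neighbor outside W, namely b
  have hpart := Finset.card_filter_add_card_filter_not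
    (s := D.neighborFinset u) (p := (· ∈ W))
  have hin : ((D.neighborFinset u).filter (· ∈ W)).card = (W.filter (D.Adj u)).card := by
    congr 1
    ext z
    simp [SimpleGraph.mem_neighborFinset, Finset.mem_filter, and_comm]
  have hdu : (D.neighborFinset u).card ≤ 3 := by
    rw [SimpleGraph.card_neighborFinset_eq_degree]; exact hdeg u
  have houtcard : ((D.neighborFinset u).filter (¬ · ∈ W)).card ≤ 1 := by omega
  have hbmem : b ∈ (D.neighborFinset u).filter (¬ · ∈ W) := by
    simp [SimpleGraph.mem_neighborFinset, hadj, hb]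
  have huniq : ∀ c, D.Adj u c → c ∉ W → c = b := by
    intro c hc hcW
    have hcmem : c ∈ (D.neighborFinset u).filter (¬ · ∈ W) := by
      simp [SimpleGraph.mem_neighborFinset, hc, hcW]
    exact Finset.card_le_one.mp houtcard c hcmem b hbmem
  -- the edge u-b is a bridge
  have hebr := hbridge s(u, b) (by rwa [SimpleGraph.mem_edgeSet])
  rw [SimpleGraph.isBridge_iff] at hebr
  push_neg at hebr
  obtain ⟨p⟩ := hebr
  obtain ⟨a, haW, c, hcW, hac⟩ := walk_cross p hu hb
  rw [SimpleGraph.deleteEdges_adj] at hac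
  obtain ⟨hac1, hac2⟩ := hac
  have ha : a = u := by
    by_contra hne
    exact hcW (honly a haW hne c hac1)
  subst ha
  have hc : c = b := huniq c hac1 hcW
  subst hc
  exact hac2 (by simp [SimpleGraph.fromEdgeSet_adj, hac1.ne])

lemma exists_boundary (D : SimpleGraph V) (hconn : D.Connected) {W : Finset V}
    (hne : W.Nonempty) (hW : W ≠ univ) : ∃ a ∈ W, ∃ b, b ∉ W ∧ D.Adj a b := by
  obtain ⟨x, hx⟩ := hne
  have hex : ∃ y, y ∉ W := by
    by_contra h
    push_neg at h
    exact hW (Finset.eq_univ_iff_forall.mpr h)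
  obtain ⟨y, hy⟩ := hex
  obtain ⟨p⟩ := hconn x y
  exact walk_cross p hx hy

lemma comp_complement_reach {D : SimpleGraph V} {W C : Finset V} {w₀ : V}
    (hw₀C : w₀ ∉ C)
    (hclosed : ∀ p q, p ∈ C → q ∈ W → q ≠ w₀ → D.Adj p q → q ∈ C)
    {a : V} (h : sReach D W a w₀) (haC : a ∉ C) : sReach D (W \ C) a w₀ := by
  have h' := h.symm
  clear h
  induction h' with
  | refl => exact Relation.ReflTransGen.refl
  | tail hwb hbc ih =>
      rename_i b c
      have hcC := haC
      by_cases hcw : c = w₀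
      · subst hcw; exact Relation.ReflTransGen.refl
      · have hbC : b ∉ C := by
          intro hbC'
          exact hcC (hclosed b c hbC' hbc.2.1 hcw hbc.2.2)
        have hcin : c ∈ W \ C := Finset.mem_sdiff.mpr ⟨hbc.2.1, hcC⟩
        have hbin : b ∈ W \ C := Finset.mem_sdiff.mpr ⟨hbc.1, hbC⟩
        exact Relation.ReflTransGen.head ⟨hcin, hbin, hbc.2.2.symm⟩ (ih hbC)

lemma key_lemma (D : SimpleGraph V) [DecidableRel D.Adj] (hconn : D.Connected)
    (hdeg : ∀ v, D.degree v ≤ 3) (hbridge : ∀ e ∈ D.edgeSet, ¬ D.IsBridge e) :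
    ∀ n (W : Finset V), W.card ≤ n → W ≠ univ → 2 ≤ W.card → fconn D W →
      ∀ u ∈ W, ∃ w ∈ W, w ≠ u ∧ (W.filter (D.Adj w)).card ≤ 2 ∧ fconn D (W.erase w) := by
  intro n
  induction n with
  | zero => intro W h0 _ h2 _ _ _; omega
  | succ n ih =>
    intro W hn hWu h2 hWc u hu
    classical
    have herase_ne_univ : ∀ v : V, W.erase v ≠ univ := by
      intro v hv
      exact hWu (Finset.eq_univ_iff_forall.mpr
        (fun x => (Finset.erase_subset v W) (hv ▸ Finset.mem_univ x)))
    by_cases hex : ∃ w ∈ W, w ≠ u ∧ (W.filter (D.Adj w)).card ≤ 2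
    · obtain ⟨w₀, hw₀W, hw₀u, hw₀d⟩ := hex
      by_cases hcut : fconn D (W.erase w₀)
      · exact ⟨w₀, hw₀W, hw₀u, hw₀d, hcut⟩
      · -- w₀ is a cut vertex of D_W; find the component of some x not containing u
        have huE : u ∈ W.erase w₀ := Finset.mem_erase.mpr ⟨(Ne.symm hw₀u), hu⟩
        have hEne : (W.erase w₀).Nonempty := ⟨u, huE⟩
        rw [fconn] at hcut
        push_neg at hcut
        obtain ⟨p, hp, q, hq, hpq⟩ := hcut hEne
        have hxex : ∃ x ∈ W.erase w₀, ¬ sReach D (W.erase w₀) u x := by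
          by_cases h1 : sReach D (W.erase w₀) u p
          · by_cases h2' : sReach D (W.erase w₀) u q
            · exact absurd (h1.symm.trans h2') hpq
            · exact ⟨q, hq, h2'⟩
          · exact ⟨p, hp, h1⟩
        obtain ⟨x, hxE, hux⟩ := hxex
        set C : Finset V := (W.erase w₀).filter (fun z => sReach D (W.erase w₀) x z) with hC
        have hxC : x ∈ C := Finset.mem_filter.mpr ⟨hxE, Relation.ReflTransGen.refl⟩
        have huC : u ∉ C := fun h => hux ((Finset.mem_filter.mp h).2.symm)
        have hCsubE : C ⊆ W.erase w₀ := Finset.filter_subset _ _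
        have hCsubW : C ⊆ W := hCsubE.trans (Finset.erase_subset _ _)
        have hclosed : ∀ p' q', p' ∈ C → q' ∈ W.erase w₀ → D.Adj p' q' → q' ∈ C := by
          intro p' q' hp' hq' hadj
          obtain ⟨hp'E, hp'r⟩ := Finset.mem_filter.mp hp'
          exact Finset.mem_filter.mpr ⟨hq', hp'r.tail ⟨hp'E, hq', hadj⟩⟩
        have hclosed' : ∀ p' q', p' ∈ C → q' ∈ W → q' ≠ w₀ → D.Adj p' q' → q' ∈ C :=
          fun p' q' h1' h2' h3' h4' => hclosed p' q' h1' (Finset.mem_erase.mpr ⟨h3', h2'⟩) h4'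
        have hw₀C : w₀ ∉ C := fun h => (Finset.mem_erase.mp (hCsubE h)).1 rfl
        obtain ⟨z₀, hz₀C, hz₀adj⟩ := exit_lemma hclosed' hw₀C
          (hWc.2 x (hCsubW hxC) w₀ hw₀W) hxC
        set W' : Finset V := insert w₀ C with hW'
        have hW'subW : W' ⊆ W := by
          intro z hz
          rcases Finset.mem_insert.mp hz with h | h
          · exact h ▸ hw₀W
          · exact hCsubW h
        have huW' : u ∉ W' := by
          intro h
          rcases Finset.mem_insert.mp h with h | h
          · exact hw₀u h.symm
          · exact huC h
        have hW'ss : W' ⊂ W := ⟨hW'subW, fun h => huW' (h hu)⟩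
        have hW'card : W'.card ≤ n := by
          have := Finset.card_lt_card hW'ss
          omega
        have hCconn : ∀ p' ∈ C, ∀ q' ∈ C, sReach D C p' q' := by
          intro p' hp' q' hq'
          have h1 : sReach D (W.erase w₀) p' q' :=
            ((Finset.mem_filter.mp hp').2.symm).trans (Finset.mem_filter.mp hq').2
          exact (sReach.restrict hclosed hp' h1).1
        have hW'reach : ∀ p' ∈ W', sReach D W' p' w₀ := by
          intro p' hp'
          rcases Finset.mem_insert.mp hp' with h | h
          · exact h ▸ Relation.ReflTransGen.refl
          · have h1 : sReach D W' p' z₀ :=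
              (hCconn p' h z₀ hz₀C).mono (Finset.subset_insert _ _)
            exact h1.tail ⟨Finset.mem_insert.mpr (Or.inr hz₀C),
              Finset.mem_insert_self _ _, hz₀adj⟩
        have hW'conn : fconn D W' :=
          ⟨⟨w₀, Finset.mem_insert_self _ _⟩,
            fun p' hp' q' hq' => (hW'reach p' hp').trans (hW'reach q' hq').symm⟩
        have hW'2 : 2 ≤ W'.card := by
          have hxW' : x ∈ W' := Finset.mem_insert.mpr (Or.inr hxC)
          have hxw : x ≠ w₀ := (Finset.mem_erase.mp hxE).1
          exact Finset.one_lt_card.mpr ⟨x, hxW', w₀, Finset.mem_insert_self _ _, hxw⟩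
        have hW'univ : W' ≠ univ := fun h => huW' (h ▸ Finset.mem_univ u)
        obtain ⟨w', hw'W', hw'w₀, hw'd, hw'c⟩ :=
          ih W' hW'card hW'univ hW'2 hW'conn w₀ (Finset.mem_insert_self _ _)
        have hw'C : w' ∈ C := (Finset.mem_insert.mp hw'W').resolve_left hw'w₀
        have hw'u : w' ≠ u := fun h => huC (h ▸ hw'C)
        have hw'W : w' ∈ W := hCsubW hw'C
        have hw₀w' : w₀ ≠ w' := Ne.symm hw'w₀
        have hndeg : (W.filter (D.Adj w')).card ≤ 2 := by
          refine le_trans (Finset.card_le_card ?_) hw'd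
          intro q' hq'
          obtain ⟨hq'W, hq'adj⟩ := Finset.mem_filter.mp hq'
          refine Finset.mem_filter.mpr ⟨?_, hq'adj⟩
          by_cases hq0 : q' = w₀
          · exact hq0 ▸ Finset.mem_insert_self _ _
          · exact Finset.mem_insert.mpr (Or.inr (hclosed' w' q' hw'C hq'W hq0 hq'adj))
        have hw₀E : w₀ ∈ W.erase w' := Finset.mem_erase.mpr ⟨hw₀w', hw₀W⟩
        have hreachE : ∀ p' ∈ W.erase w', sReach D (W.erase w') p' w₀ := by
          intro p' hp'
          obtain ⟨hp'w, hp'W⟩ := Finset.mem_erase.mp hp'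
          by_cases hpC : p' ∈ C
          · have h1 : p' ∈ W'.erase w' :=
              Finset.mem_erase.mpr ⟨hp'w, Finset.mem_insert.mpr (Or.inr hpC)⟩
            have h2 : w₀ ∈ W'.erase w' :=
              Finset.mem_erase.mpr ⟨hw₀w', Finset.mem_insert_self _ _⟩
            exact (hw'c.2 p' h1 w₀ h2).mono (Finset.erase_subset_erase _ hW'subW)
          · have h1 := comp_complement_reach hw₀C hclosed' (hWc.2 p' hp'W w₀ hw₀W) hpC
            refine h1.mono ?_
            intro z hz
            obtain ⟨hzW, hzC⟩ := Finset.mem_sdiff.mp hz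
            exact Finset.mem_erase.mpr ⟨fun h => hzC (h ▸ hw'C), hzW⟩
        exact ⟨w', hw'W, hw'u, hndeg,
          ⟨⟨w₀, hw₀E⟩, fun p' hp' q' hq' =>
            (hreachE p' hp').trans (hreachE q' hq').symm⟩⟩
    · push_neg at hex
      have h3 : ∀ w ∈ W, w ≠ u → 3 ≤ (W.filter (D.Adj w)).card := by
        intro w hw hwu
        exact hex w hw hwu
      have honly : ∀ a ∈ W, a ≠ u → ∀ c, D.Adj a c → c ∈ W := fun a ha hau c hc =>
        all_nbrs_in D hdeg (h3 a ha hau) hc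
      obtain ⟨a, haW, b, hbW, hab⟩ :=
        exists_boundary D hconn ⟨u, hu⟩ hWu
      have hau : a = u := by
        by_contra hne'
        exact hbW (honly a haW hne' b hab)
      subst hau
      have hle1 := leaf_of_boundary D hdeg hbridge haW hbW hab honly
      obtain ⟨v, hv, hvu⟩ := Finset.exists_mem_ne (by omega : 1 < W.card) a
      have hchain := hWc.2 a haW v hv
      rcases Relation.ReflTransGen.cases_head hchain with heq | ⟨c, hrel, -⟩
      · exact absurd heq.symm hvu
      have hcmem : c ∈ W.filter (D.Adj a) := Finset.mem_filter.mpr ⟨hrel.2.1, hrel.2.2⟩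
      have hfil : W.filter (D.Adj a) = {c} :=
        Finset.eq_singleton_iff_unique_mem.mpr
          ⟨hcmem, fun z hz => Finset.card_le_one.mp hle1 z hz c hcmem⟩
      have hcW : c ∈ W := hrel.2.1
      have hcu : c ≠ a := hrel.2.2.ne'
      have hcE : c ∈ W.erase a := Finset.mem_erase.mpr ⟨hcu, hcW⟩
      have hEreach : ∀ x ∈ W.erase a, sReach D (W.erase a) x c := by
        intro x hx
        set S := (W.erase a).filter (fun z => sReach D (W.erase a) x z) with hS
        have hxS : x ∈ S := Finset.mem_filter.mpr ⟨hx, Relation.ReflTransGen.refl⟩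
        have hclosedS : ∀ p' q', p' ∈ S → q' ∈ W → q' ≠ a → D.Adj p' q' → q' ∈ S := by
          intro p' q' hp' hq' hqa hadj
          obtain ⟨hpE, hpr⟩ := Finset.mem_filter.mp hp'
          exact Finset.mem_filter.mpr ⟨Finset.mem_erase.mpr ⟨hqa, hq'⟩,
            hpr.tail ⟨hpE, Finset.mem_erase.mpr ⟨hqa, hq'⟩, hadj⟩⟩
        have haS : a ∉ S := fun h =>
          (Finset.mem_erase.mp ((Finset.filter_subset _ _) h)).1 rfl
        obtain ⟨z, hzS, hzadj⟩ := exit_lemma hclosedS haS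
          (hWc.2 x ((Finset.erase_subset _ _) hx) a haW) hxS
        have hzfil : z ∈ W.filter (D.Adj a) := Finset.mem_filter.mpr
          ⟨(Finset.erase_subset _ _) ((Finset.filter_subset _ _) hzS), hzadj.symm⟩
        rw [hfil] at hzfil
        have hz : z = c := Finset.mem_singleton.mp hzfil
        subst hz
        exact (Finset.mem_filter.mp hzS).2
      have hEconn : fconn D (W.erase a) :=
        ⟨⟨c, hcE⟩, fun p' hp' q' hq' => (hEreach p' hp').trans (hEreach q' hq').symm⟩
      have h3W : 3 ≤ W.card :=
        le_trans (h3 v hv hvu) (Finset.card_le_card (Finset.filter_subset _ _))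
      have hcardE : (W.erase a).card ≤ n := by
        rw [Finset.card_erase_of_mem haW]; omega
      have h2E : 2 ≤ (W.erase a).card := by rw [Finset.card_erase_of_mem haW]; omega
      obtain ⟨w, hwE, hwc, hwd, -⟩ :=
        ih (W.erase a) hcardE (herase_ne_univ a) h2E hEconn c hcE
      exfalso
      have hwW : w ∈ W := (Finset.erase_subset _ _) hwE
      have hwu : w ≠ a := (Finset.mem_erase.mp hwE).1
      have hwadju : ¬ D.Adj w a := by
        intro h
        have hmem : w ∈ W.filter (D.Adj a) := Finset.mem_filter.mpr ⟨hwW, h.symm⟩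
        rw [hfil] at hmem
        exact hwc (Finset.mem_singleton.mp hmem)
      have hsub : W.filter (D.Adj w) ⊆ (W.erase a).filter (D.Adj w) := by
        intro q' hq'
        obtain ⟨hqW, hqadj⟩ := Finset.mem_filter.mp hq'
        have hqu : q' ≠ a := fun h => hwadju (h ▸ hqadj)
        exact Finset.mem_filter.mpr ⟨Finset.mem_erase.mpr ⟨hqu, hqW⟩, hqadj⟩
      have h1 := h3 w hwW hwu
      have h2' := Finset.card_le_card hsub
      omega

lemma fconn_singleton (D : SimpleGraph V) (x : V) : fconn D ({x} : Finset V) := by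
  refine ⟨⟨x, Finset.mem_singleton_self x⟩, ?_⟩
  intro p hp q hq
  rw [Finset.mem_singleton] at hp hq
  subst hp; subst hq
  exact Relation.ReflTransGen.refl

lemma build_lemma (D : SimpleGraph V) [DecidableRel D.Adj] (hconn : D.Connected)
    (hdeg : ∀ v, D.degree v ≤ 3) (hbridge : ∀ e ∈ D.edgeSet, ¬ D.IsBridge e) :
    ∀ n (U : Finset V), U.card ≤ n → U ≠ univ → fconn D U →
      ∃ l : List V, l.Nodup ∧ l.toFinset = U ∧
        ∀ i (hi : i < l.length), fconn D ((l.take (i + 1)).toFinset) ∧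
          ((l.take i).filter (fun w => D.Adj (l.get ⟨i, hi⟩) w)).length ≤ 2 := by
  intro n
  induction n with
  | zero =>
      intro U h0 _ hU
      have := Finset.card_pos.mpr hU.1
      omega
  | succ n ih =>
    intro U hn hUu hUc
    by_cases h1 : U.card ≤ 1
    · obtain ⟨x, hx⟩ := hUc.1
      have hUx : U = {x} := Finset.eq_singleton_iff_unique_mem.mpr
        ⟨hx, fun y hy => Finset.card_le_one.mp h1 y hy x hx⟩
      refine ⟨[x], List.nodup_singleton x, by simp [hUx], ?_⟩
      intro i hi
      simp only [List.length_singleton] at hi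
      have hi0 : i = 0 := by omega
      subst hi0
      constructor
      · simpa using fconn_singleton D x
      · simp
    · push_neg at h1
      obtain ⟨u, hu⟩ := hUc.1
      obtain ⟨w, hwU, -, hwd, hwc⟩ :=
        key_lemma D hconn hdeg hbridge (n + 1) U hn hUu h1 hUc u hu
      have hUe_univ : U.erase w ≠ univ := by
        intro hv
        exact hUu (Finset.eq_univ_iff_forall.mpr
          (fun z => (Finset.erase_subset w U) (hv ▸ Finset.mem_univ z)))
      have hcard : (U.erase w).card ≤ n := by
        rw [Finset.card_erase_of_mem hwU]; omega
      obtain ⟨l, hnd, htf, hcond⟩ := ih (U.erase w) hcard hUe_univ hwc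
      have hwl : w ∉ l := by
        intro h
        have : w ∈ U.erase w := htf ▸ List.mem_toFinset.mpr h
        exact (Finset.mem_erase.mp this).1 rfl
      refine ⟨l ++ [w], ?_, ?_, ?_⟩
      · exact List.nodup_append'.mpr ⟨hnd, List.nodup_singleton w,
          by simpa [List.disjoint_singleton] using hwl⟩
      · rw [List.toFinset_append, htf]
        simp only [List.toFinset_cons, List.toFinset_nil, LawfulSingleton.insert_empty_eq]
        rw [Finset.union_comm, ← Finset.insert_eq]
        exact Finset.insert_erase hwU
      · intro i hi
        simp only [List.length_append, List.length_singleton] at hi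
        by_cases hlt : i < l.length
        · have ht1 : (l ++ [w]).take (i + 1) = l.take (i + 1) :=
            List.take_append_of_le_length (by omega)
          have ht0 : (l ++ [w]).take i = l.take i :=
            List.take_append_of_le_length (by omega)
          have hg : (l ++ [w]).get ⟨i, by simpa using hi⟩ = l.get ⟨i, hlt⟩ := by
            simp [List.get_eq_getElem, List.getElem_append_left, hlt]
          rw [ht1, ht0, hg]
          exact hcond i hlt
        · have hieq : i = l.length := by omega
          subst hieq
          have ht1 : (l ++ [w]).take (l.length + 1) = l ++ [w] :=
            List.take_of_length_le (by simp)
          have ht0 : (l ++ [w]).take l.length = l :=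
            (List.take_append_of_le_length le_rfl).trans List.take_length
          have hg : (l ++ [w]).get ⟨l.length, by simpa using hi⟩ = w := by
            simp [List.get_eq_getElem, List.getElem_append_right]
          rw [ht1, ht0, hg]
          constructor
          · have : (l ++ [w]).toFinset = U := by
              rw [List.toFinset_append, htf]
              simp only [List.toFinset_cons, List.toFinset_nil, LawfulSingleton.insert_empty_eq]
              rw [Finset.union_comm, ← Finset.insert_eq]
              exact Finset.insert_erase hwU
            rw [this]
            exact hUc
          · have hlen : (l.filter (fun z => D.Adj w z)).length
                = ((U.erase w).filter (D.Adj w)).card := by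
              rw [← htf, ← List.toFinset_card_of_nodup (hnd.filter _)]
              congr 1
              ext a
              simp [List.mem_filter]
            calc (l.filter (fun z => D.Adj w z)).length
                = ((U.erase w).filter (D.Adj w)).card := hlen
              _ ≤ (U.filter (D.Adj w)).card :=
                  Finset.card_le_card (Finset.filter_subset_filter _ (Finset.erase_subset _ _))
              _ ≤ 2 := hwd

/-- in a connected bridgeless graph `D` of maximum degree at most 3,
every proper vertex subset `U` inducing a connected subgraph admits an ordering
`u_1, …, u_k` such that each prefix induces a connected subgraph in which the
last added vertex has degree at most 2. -/
theorem stmt_6 {V : Type} [Fintype V] [DecidableEq V]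
    (D : SimpleGraph V) [DecidableRel D.Adj]
    (hconn : D.Connected)
    (hdeg : ∀ v, D.degree v ≤ 3)
    (hbridge : ∀ e ∈ D.edgeSet, ¬ D.IsBridge e)
    (U : Finset V) (hU : U ⊂ univ)
    (hUconn : (D.induce (U : Set V)).Connected) :
    ∃ l : List V, l.Nodup ∧ l.toFinset = U ∧
      ∀ i (hi : i < l.length),
        (D.induce {v | v ∈ l.take (i + 1)}).Connected ∧
        ((l.take i).filter (fun w => D.Adj (l.get ⟨i, hi⟩) w)).length ≤ 2 := by
  have hUu : U ≠ univ := hU.ne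
  have hUc : fconn D U := fconn_iff.mp hUconn
  obtain ⟨l, hnd, htf, hcond⟩ :=
    build_lemma D hconn hdeg hbridge U.card U le_rfl hUu hUc
  refine ⟨l, hnd, htf, ?_⟩
  intro i hi
  obtain ⟨hc1, hc2⟩ := hcond i hi
  refine ⟨?_, hc2⟩
  have hset : {v | v ∈ l.take (i + 1)} = (((l.take (i + 1)).toFinset : Finset V) : Set V) := by
    ext v
    simp
  rw [hset]
  exact fconn_iff.mpr hc1
end

section
/- Let G be a planar Tanner graph of a code with minimum distance d, and suppose the dual C†(G) of its check graph contains a connected induced subgraph on a proper vertex subset U that is codeword-supporting. Then d ≤ |U| + 3. -/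
open Finset

lemma walk_frontier {F : Type} [DecidableEq F] (D : SimpleGraph F) (U : Set F) (T : Finset F) :
    ∀ {a b : U}, (D.induce U).Walk a b → ↑a ∈ T → (↑b : F) ∉ T →
    ∃ x y : F, x ∈ T ∧ y ∈ U ∧ y ∉ T ∧ D.Adj x y := by
  intro a b p
  induction p with
  | nil => intro ha hb; exact absurd ha hb
  | @cons u v w h q ih =>
    intro ha hb
    by_cases hv : (↑v : F) ∈ T
    · exact ih hv hb
    · exact ⟨↑u, ↑v, ha, v.2, hv, h⟩

lemma union_card_le {F : Type} [Fintype F] [DecidableEq F] {m : ℕ}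
    (D : SimpleGraph F) (Vc : F → Finset (Fin m))
    (hVc : ∀ f, (Vc f).card = 3) (hshare : ∀ f g, D.Adj f g → (Vc f ∩ Vc g).card = 2)
    (U : Finset F) (hUconn : (D.induce (U : Set F)).Connected) :
    (U.biUnion Vc).card ≤ U.card + 2 := by
  rcases U.eq_empty_or_nonempty with rfl | ⟨f0, hf0⟩
  · simp
  -- main induction on (U \ T).card
  suffices h : ∀ k T, f0 ∈ T → T ⊆ U → (U \ T).card = k →
      (T.biUnion Vc).card ≤ T.card + 2 →
      (U.biUnion Vc).card ≤ U.card + 2 by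
    refine h (U \ {f0}).card {f0} (mem_singleton_self f0) (by simpa using hf0) rfl ?_
    simp [hVc f0]
  intro k
  induction k with
  | zero =>
    intro T hf0T hTU hcard hbound
    have : U = T := Finset.Subset.antisymm (fun u hu => by
      by_contra hu'
      have : u ∈ U \ T := mem_sdiff.mpr ⟨hu, hu'⟩
      simp [Finset.card_eq_zero.mp hcard] at this) hTU
    rw [this]; exact hbound
  | succ k ih =>
    intro T hf0T hTU hcard hbound
    have hne : (U \ T).Nonempty := Finset.card_pos.mp (by omega)
    obtain ⟨h0, hh0⟩ := hne
    have hh0U : h0 ∈ U := (mem_sdiff.mp hh0).1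
    have hh0T : h0 ∉ T := (mem_sdiff.mp hh0).2
    -- get reachability in induced graph
    have hreach := hUconn.preconnected ⟨f0, by simpa using hf0⟩ ⟨h0, by simpa using hh0U⟩
    obtain ⟨p⟩ := hreach
    obtain ⟨x, y, hxT, hyU, hyT, hadj⟩ := walk_frontier D (U : Set F) T p hf0T hh0T
    have hyU' : y ∈ U := by simpa using hyU
    set T' := insert y T with hT'
    have hsub : Vc y \ T.biUnion Vc ⊆ Vc y \ Vc x := by
      intro a ha
      rw [mem_sdiff] at ha ⊢
      exact ⟨ha.1, fun hx => ha.2 (mem_biUnion.mpr ⟨x, hxT, hx⟩)⟩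
    have hcard1 : (Vc y \ Vc x).card = 1 := by
      have := Finset.card_sdiff_add_card_inter (Vc y) (Vc x)
      rw [hshare y x hadj.symm, hVc y] at this
      omega
    have hgrow : (T'.biUnion Vc).card ≤ (T.biUnion Vc).card + 1 := by
      have : T'.biUnion Vc ⊆ T.biUnion Vc ∪ (Vc y \ Vc x) := by
        intro a ha
        rw [mem_biUnion] at ha
        obtain ⟨g, hg, hag⟩ := ha
        rcases Finset.mem_insert.mp hg with rfl | hg'
        · by_cases hin : a ∈ T.biUnion Vc
          · exact mem_union_left _ hin
          · exact mem_union_right _ (hsub (mem_sdiff.mpr ⟨hag, hin⟩))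
        · exact mem_union_left _ (mem_biUnion.mpr ⟨g, hg', hag⟩)
      calc (T'.biUnion Vc).card ≤ (T.biUnion Vc ∪ (Vc y \ Vc x)).card := Finset.card_le_card this
        _ ≤ (T.biUnion Vc).card + (Vc y \ Vc x).card := Finset.card_union_le _ _
        _ = (T.biUnion Vc).card + 1 := by rw [hcard1]
    refine ih T' (Finset.mem_insert_of_mem hf0T) (Finset.insert_subset hyU' hTU) ?_ ?_
    · have hyT' : y ∈ U \ T := mem_sdiff.mpr ⟨hyU', hyT⟩
      have : U \ T' = (U \ T).erase y := by
        ext a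
        simp only [hT', mem_sdiff, mem_erase, Finset.mem_insert]
        tauto
      rw [this, Finset.card_erase_of_mem hyT', hcard]; omega
    · have : T'.card = T.card + 1 := Finset.card_insert_of_notMem hyT
      omega

lemma low_weight_codeword {m n : ℕ} (H : Matrix (Fin m) (Fin n) (ZMod 2))
    (S : Finset (Fin m))
    (hcs : S.card < (univ.filter (fun b => colSupp H b ⊆ S)).card) :
    ∃ x : Fin n → ZMod 2, x ≠ 0 ∧ H.mulVec x = 0 ∧ wt x ≤ S.card + 1 := by
  set I : Finset (Fin n) := univ.filter (fun b => colSupp H b ⊆ S) with hI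
  obtain ⟨I', hI'I, hI'card⟩ := Finset.exists_subset_card_eq (show S.card + 1 ≤ I.card by omega)
  -- linear map from I'-vectors to S-vectors
  let M : Matrix ↥S ↥I' (ZMod 2) := fun c b => H ↑c ↑b
  have hni : ¬ Function.Injective M.mulVecLin := by
    intro hinj
    have h1 := LinearMap.finrank_le_finrank_of_injective hinj
    rw [Module.finrank_fintype_fun_eq_card, Module.finrank_fintype_fun_eq_card,
      Fintype.card_coe, Fintype.card_coe, hI'card] at h1
    omega
  rw [injective_iff_map_eq_zero M.mulVecLin] at hni
  push_neg at hni
  obtain ⟨y, hy⟩ := hni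
  have hy0 : M.mulVecLin y = 0 ∧ y ≠ 0 := hy
  obtain ⟨hker, hyne⟩ := hy0
  refine ⟨fun b => if h : b ∈ I' then y ⟨b, h⟩ else 0, ?_, ?_, ?_⟩
  · intro hz
    apply hyne
    funext b
    have := congrFun hz ↑b
    simpa [b.2] using this
  · funext c
    have hsum : H.mulVec (fun b => if h : b ∈ I' then y ⟨b, h⟩ else 0) c
        = ∑ b ∈ I', H c b * (if h : b ∈ I' then y ⟨b, h⟩ else 0) := by
      rw [Matrix.mulVec, dotProduct]
      refine (Finset.sum_subset (Finset.subset_univ I') ?_).symm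
      intro b _ hb
      simp [hb]
    by_cases hc : c ∈ S
    · have := congrFun hker ⟨c, hc⟩
      simp only [Matrix.mulVecLin_apply, Matrix.mulVec, dotProduct, Pi.zero_apply] at this
      rw [hsum, ← Finset.sum_attach I' (fun b => H c ↑b * _)]
      simp only [Pi.zero_apply]
      rw [← this]
      apply Finset.sum_congr rfl
      intro b _
      simp [M, b.2]
    · rw [hsum]
      simp only [Pi.zero_apply]
      apply Finset.sum_eq_zero
      intro b hb
      have hbI : b ∈ I := hI'I hb
      have : colSupp H b ⊆ S := by
        rw [hI] at hbI; exact (Finset.mem_filter.mp hbI).2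
      have hHcb : H c b = 0 := by
        by_contra hne
        exact hc (this (by simp [colSupp, hne]))
      simp [hHcb]
  · rw [← hI'card]
    apply Finset.card_le_card
    intro b hb
    simp only [mem_filter] at hb
    by_contra hbI'
    exact hb.2 (by simp [hbI'])

/-- `D` is the dual of the (maximal planar) check graph of a planar
Tanner graph `H`: a connected bridgeless cubic graph whose vertices are the
triangular faces, face `f` having check-node set `Vc f` of size 3, adjacent
faces sharing exactly 2 check nodes.  If a proper subset `U` of faces induces a
connected subgraph and is codeword-supporting (the check nodes `V^c_U = ⋃_{f∈U} Vc f`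
induce more than `|V^c_U|` bit nodes), then `d ≤ |U| + 3`. -/
theorem stmt_8 {m n : ℕ} (H : Matrix (Fin m) (Fin n) (ZMod 2)) (d : ℕ)
    (hd : IsMinDist H d)
    (F : Type) [Fintype F] [DecidableEq F]
    (D : SimpleGraph F) [DecidableRel D.Adj]
    (hconn : D.Connected)
    (hcubic : ∀ f, D.degree f = 3)
    (hbridge : ∀ e ∈ D.edgeSet, ¬ D.IsBridge e)
    (Vc : F → Finset (Fin m)) (hVc : ∀ f, (Vc f).card = 3)
    (hshare : ∀ f g, D.Adj f g → (Vc f ∩ Vc g).card = 2)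
    (U : Finset F) (hU : U ⊂ univ)
    (hUconn : (D.induce (U : Set F)).Connected)
    (hcs : (U.biUnion Vc).card <
      (univ.filter (fun b => colSupp H b ⊆ U.biUnion Vc)).card) :
    d ≤ U.card + 3 := by
  have hS := union_card_le D Vc hVc hshare U hUconn
  obtain ⟨x, hx0, hxc, hxw⟩ := low_weight_codeword H (U.biUnion Vc) hcs
  have := hd.2 x hx0 hxc
  omega
end
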